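/- arXiv:2006.03416 — 2 statements merged into one kernel-verified Lean document; each statement's English description precedes it below -/
import Mathlib

section
/- Let K₀, K₁ be symmetric positive definite n×n matrices and t ∈ [0,1]. For ε > 0 define the entropic interpolant covariance K_t^ε = (1−t)²·K₀ + t²·K₁ + t(1−t)·(R₀₁(ε) + R₁₀(ε)), where R₀₁(ε) = K₀^{1/2}((ε²/16)·I + K₀^{1/2}K₁K₀^{1/2})^{1/2}K₀^{−1/2} and R₁₀(ε) = K₁^{1/2}((ε²/16)·I + K₁^{1/2}K₀K₁^{1/2})^{1/2}K₁^{−1/2}. Then, as ε → 0⁺, K_t^ε converges to the 2-Wasserstein geodesic covariance K_t = (1−t)²·K₀ + t²·K₁ + t(1−t)·(K₀^{1/2}(K₀^{1/2}K₁K₀^{1/2})^{1/2}K₀^{−1/2} + K₁^{1/2}(K₁^{1/2}K₀K₁^{1/2})^{1/2}K₁^{−1/2}). -/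
open Matrix
open scoped Classical

noncomputable section

/-- The unique symmetric positive semidefinite square root of a positive
semidefinite matrix (junk value `0` otherwise). -/
def sqrtm {n : ℕ} (A : Matrix (Fin n) (Fin n) ℝ) : Matrix (Fin n) (Fin n) ℝ :=
  if h : A.PosSemidef then
    (h.1.eigenvectorUnitary : Matrix (Fin n) (Fin n) ℝ) *
      diagonal ((↑) ∘ Real.sqrt ∘ h.1.eigenvalues) *
      (star h.1.eigenvectorUnitary : Matrix (Fin n) (Fin n) ℝ)
  else 0

end

section aux

open Filter

lemma sqrtm_eq_cfc {n : ℕ} {A : Matrix (Fin n) (Fin n) ℝ} (hA : A.PosSemidef) :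
    sqrtm A = cfc Real.sqrt A := by
  rw [hA.1.cfc_eq, sqrtm, dif_pos hA]
  rfl

lemma sqrtm_isHermitian {n : ℕ} {A : Matrix (Fin n) (Fin n) ℝ} (hA : A.PosSemidef) :
    (sqrtm A)ᴴ = sqrtm A := by
  rw [sqrtm_eq_cfc hA]
  exact (cfc_predicate Real.sqrt A : IsSelfAdjoint _)

lemma smul_one_add_posSemidef {n : ℕ} {M : Matrix (Fin n) (Fin n) ℝ}
    (hM : M.PosSemidef) {a : ℝ} (ha : 0 ≤ a) : (a • (1 : Matrix (Fin n) (Fin n) ℝ) + M).PosSemidef := by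
  have h1 : (a • (1 : Matrix (Fin n) (Fin n) ℝ)).PosSemidef := by
    rw [smul_one_eq_diagonal]
    exact posSemidef_diagonal_iff.mpr fun _ => ha
  exact h1.add hM

lemma sqrtm_shift_eq {n : ℕ} {M : Matrix (Fin n) (Fin n) ℝ}
    (hM : M.PosSemidef) {a : ℝ} (ha : 0 ≤ a) :
    sqrtm (a • 1 + M) =
      hM.1.eigenvectorUnitary.1 *
        diagonal (fun i => Real.sqrt (a + hM.1.eigenvalues i)) *
        (star hM.1.eigenvectorUnitary : Matrix (Fin n) (Fin n) ℝ) := by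
  have hpsd := smul_one_add_posSemidef hM ha
  set U : Matrix (Fin n) (Fin n) ℝ := hM.1.eigenvectorUnitary.1 with hU
  set D : Matrix (Fin n) (Fin n) ℝ := diagonal (fun i => Real.sqrt (a + hM.1.eigenvalues i))
  have hstar : (star hM.1.eigenvectorUnitary : Matrix (Fin n) (Fin n) ℝ) = Uᴴ := rfl
  have hUU : Uᴴ * U = 1 := by
    rw [← hstar]; exact Unitary.coe_star_mul_self _
  have hfpsd : (U * D * Uᴴ).PosSemidef := by
    apply PosSemidef.mul_mul_conjTranspose_same
    exact posSemidef_diagonal_iff.mpr fun i =>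
      Real.sqrt_nonneg _
  have hsq : (U * D * Uᴴ) ^ 2 = a • 1 + M := by
    have hDD : D * D = diagonal (fun i => a + hM.1.eigenvalues i) := by
      have heq : (fun i => Real.sqrt (a + hM.1.eigenvalues i) * Real.sqrt (a + hM.1.eigenvalues i))
          = fun i => a + hM.1.eigenvalues i :=
        funext fun i => Real.mul_self_sqrt (add_nonneg ha (hM.eigenvalues_nonneg i))
      rw [diagonal_mul_diagonal, heq]
    have hUnit : U * Uᴴ = 1 := by
      rw [← hstar]; exact Unitary.coe_mul_star_self _
    have hspec : M = U * diagonal (hM.1.eigenvalues) * Uᴴ := by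
      have := hM.1.spectral_theorem
      rw [← hstar]
      simpa [hU, Function.comp] using this
    have hexp : (U * D * Uᴴ) ^ 2 = U * (D * (Uᴴ * U) * D) * Uᴴ := by
      rw [pow_two]
      simp only [mul_assoc]
    rw [hexp, hUU, mul_one, hDD]
    have hdg : diagonal (fun i => a + hM.1.eigenvalues i)
        = a • (1 : Matrix (Fin n) (Fin n) ℝ) + diagonal (hM.1.eigenvalues) := by
      rw [smul_one_eq_diagonal, diagonal_add]
    rw [hdg, mul_add, add_mul, mul_smul_comm, smul_mul_assoc, mul_one, hUnit, ← hspec]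
  have hcomp : cfc (Real.sqrt ∘ fun x => a + x) M = cfc Real.sqrt (cfc (fun x => a + x) M) :=
    cfc_comp Real.sqrt (fun x => a + x) M hM.1.isSelfAdjoint
  have hlin : cfc (fun x => a + x) M = a • 1 + M := by
    have h := cfc_const_add a id M (ha := hM.1.isSelfAdjoint)
    rw [cfc_id ℝ M hM.1.isSelfAdjoint, Algebra.algebraMap_eq_smul_one] at h
    exact h
  rw [hlin, hM.1.cfc_eq] at hcomp
  rw [sqrtm_eq_cfc hpsd, ← hcomp, hstar]
  rfl

lemma tendsto_sqrtm_shift {n : ℕ} {M : Matrix (Fin n) (Fin n) ℝ}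
    (hM : M.PosSemidef) :
    Tendsto (fun a : ℝ => sqrtm (a • 1 + M)) (nhdsWithin 0 (Set.Ioi 0)) (nhds (sqrtm M)) := by
  set U : Matrix (Fin n) (Fin n) ℝ := hM.1.eigenvectorUnitary.1
  have hc : Continuous (fun a : ℝ =>
      U * diagonal (fun i => Real.sqrt (a + hM.1.eigenvalues i)) *
        (star hM.1.eigenvectorUnitary : Matrix (Fin n) (Fin n) ℝ)) := by
    have hd : Continuous (fun a : ℝ => fun i : Fin n => Real.sqrt (a + hM.1.eigenvalues i)) := by
      apply continuous_pi
      intro i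
      exact Real.continuous_sqrt.comp (continuous_id.add continuous_const)
    exact (continuous_const.mul hd.matrix_diagonal).mul continuous_const
  have h0 : sqrtm M = U * diagonal (fun i => Real.sqrt ((0:ℝ) + hM.1.eigenvalues i)) *
      (star hM.1.eigenvectorUnitary : Matrix (Fin n) (Fin n) ℝ) := by
    have := sqrtm_shift_eq hM (le_refl (0:ℝ))
    simpa using this
  have := (hc.tendsto 0).mono_left (nhdsWithin_le_nhds (s := Set.Ioi (0:ℝ)))
  rw [← h0] at this
  refine this.congr' ?_
  filter_upwards [self_mem_nhdsWithin] with a ha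
  exact (sqrtm_shift_eq hM (le_of_lt ha)).symm

lemma tendsto_sqrtm_eps {n : ℕ} {M : Matrix (Fin n) (Fin n) ℝ}
    (hM : M.PosSemidef) :
    Tendsto (fun ε : ℝ => sqrtm ((ε ^ 2 / 16) • 1 + M)) (nhdsWithin 0 (Set.Ioi 0))
      (nhds (sqrtm M)) := by
  have h1 : Tendsto (fun ε : ℝ => ε ^ 2 / 16) (nhdsWithin 0 (Set.Ioi 0))
      (nhdsWithin 0 (Set.Ioi 0)) := by
    apply tendsto_nhdsWithin_of_tendsto_nhds_of_eventually_within
    · have : Tendsto (fun ε : ℝ => ε ^ 2 / 16) (nhds 0) (nhds ((0:ℝ) ^ 2 / 16)) :=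
        ((continuous_pow 2).div_const 16).tendsto 0
      simpa using this.mono_left nhdsWithin_le_nhds
    · filter_upwards [self_mem_nhdsWithin] with ε hε
      have hε' : (0:ℝ) < ε := hε
      simp only [Set.mem_Ioi]
      positivity
  exact (tendsto_sqrtm_shift hM).comp h1

end aux

theorem stmt_15 {n : ℕ} (K₀ K₁ : Matrix (Fin n) (Fin n) ℝ)
    (hK₀ : K₀.PosDef) (hK₁ : K₁.PosDef) (t : ℝ) (ht : t ∈ Set.Icc (0 : ℝ) 1)
    (R₀₁ R₁₀ : ℝ → Matrix (Fin n) (Fin n) ℝ) (Kt : ℝ → Matrix (Fin n) (Fin n) ℝ)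
    (hR₀₁ : ∀ ε, R₀₁ ε =
      sqrtm K₀ * sqrtm ((ε ^ 2 / 16) • 1 + sqrtm K₀ * K₁ * sqrtm K₀) * (sqrtm K₀)⁻¹)
    (hR₁₀ : ∀ ε, R₁₀ ε =
      sqrtm K₁ * sqrtm ((ε ^ 2 / 16) • 1 + sqrtm K₁ * K₀ * sqrtm K₁) * (sqrtm K₁)⁻¹)
    (hKt : ∀ ε, Kt ε = (1 - t) ^ 2 • K₀ + t ^ 2 • K₁ + (t * (1 - t)) • (R₀₁ ε + R₁₀ ε)) :
    Filter.Tendsto Kt (nhdsWithin 0 (Set.Ioi 0))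
      (nhds ((1 - t) ^ 2 • K₀ + t ^ 2 • K₁ + (t * (1 - t)) •
        (sqrtm K₀ * sqrtm (sqrtm K₀ * K₁ * sqrtm K₀) * (sqrtm K₀)⁻¹ +
          sqrtm K₁ * sqrtm (sqrtm K₁ * K₀ * sqrtm K₁) * (sqrtm K₁)⁻¹))) := by
  have hM₀ : (sqrtm K₀ * K₁ * sqrtm K₀).PosSemidef := by
    have := hK₁.posSemidef.mul_mul_conjTranspose_same (sqrtm K₀)
    rwa [sqrtm_isHermitian hK₀.posSemidef] at this
  have hM₁ : (sqrtm K₁ * K₀ * sqrtm K₁).PosSemidef := by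
    have := hK₀.posSemidef.mul_mul_conjTranspose_same (sqrtm K₁)
    rwa [sqrtm_isHermitian hK₁.posSemidef] at this
  have h0 : Filter.Tendsto (fun ε => R₀₁ ε) (nhdsWithin 0 (Set.Ioi 0))
      (nhds (sqrtm K₀ * sqrtm (sqrtm K₀ * K₁ * sqrtm K₀) * (sqrtm K₀)⁻¹)) := by
    simp_rw [hR₀₁]
    exact ((tendsto_sqrtm_eps hM₀).const_mul (sqrtm K₀)).mul_const (sqrtm K₀)⁻¹
  have h1 : Filter.Tendsto (fun ε => R₁₀ ε) (nhdsWithin 0 (Set.Ioi 0))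
      (nhds (sqrtm K₁ * sqrtm (sqrtm K₁ * K₀ * sqrtm K₁) * (sqrtm K₁)⁻¹)) := by
    simp_rw [hR₁₀]
    exact ((tendsto_sqrtm_eps hM₁).const_mul (sqrtm K₁)).mul_const (sqrtm K₁)⁻¹
  have hKt' : Kt = fun ε => (1 - t) ^ 2 • K₀ + t ^ 2 • K₁ + (t * (1 - t)) • (R₀₁ ε + R₁₀ ε) :=
    funext hKt
  rw [hKt']
  exact (tendsto_const_nhds.add tendsto_const_nhds).add ((h0.add h1).const_smul _)
end

section
/- Let ε > 0, let K₁, K₂ be symmetric positive definite n×n matrices, and set Ŝ = (ε/8)·K₂^{−1/2}·(−ε·I + (ε²·I + 16·K₂^{1/2} K₁ K₂^{1/2})^{1/2})·K₂^{−1/2} and Mᵉ = I + (I + (16/ε²)·K₁^{1/2} K₂ K₁^{1/2})^{1/2}. Then the matrix K₂^{1/2}(K₁ − Ŝ)K₂^{1/2} is symmetric positive semidefinite and Tr( (K₂^{1/2}(K₁ − Ŝ)K₂^{1/2})^{1/2} ) = (ε/4)·(Tr(Mᵉ) − 2n), and furthermore log det(K₁) − log det(Ŝ) = log det(Mᵉ)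 − n·log 2. -/
open Matrix
open scoped Classical

section Aux

variable {n : ℕ}

open scoped MatrixOrder

lemma psd_smul {c : ℝ} (hc : 0 ≤ c) {A : Matrix (Fin n) (Fin n) ℝ} (hA : A.PosSemidef) :
    (c • A).PosSemidef := by
  refine ⟨?_, fun x => ?_⟩
  · unfold Matrix.IsHermitian
    rw [conjTranspose_smul, hA.1]
    simp
  · exact (hA.smul hc).2 x

lemma sqrtm_eq {A : Matrix (Fin n) (Fin n) ℝ} (h : A.PosSemidef) : sqrtm A = CFC.sqrt A := by
  rw [CFC.sqrt_eq_cfc, cfc_nnreal_eq_real _ A h.nonneg, h.1.cfc_eq]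
  unfold sqrtm
  rw [dif_pos h]
  simp only [IsHermitian.cfc, Unitary.conjStarAlgAut_apply]
  congr 3
  ext i
  simp [Real.coe_toNNReal', h.eigenvalues_nonneg i]

lemma sqrtm_psd {A : Matrix (Fin n) (Fin n) ℝ} (h : A.PosSemidef) : (sqrtm A).PosSemidef := by
  rw [sqrtm_eq h]; exact Matrix.nonneg_iff_posSemidef.mp (CFC.sqrt_nonneg A)

lemma sqrtm_mul_self {A : Matrix (Fin n) (Fin n) ℝ} (h : A.PosSemidef) :
    sqrtm A * sqrtm A = A := by
  rw [sqrtm_eq h]; exact CFC.sqrt_mul_sqrt_self A h.nonneg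

lemma sqrtm_unique {A B : Matrix (Fin n) (Fin n) ℝ} (hB : B.PosSemidef) (hBA : B * B = A) :
    sqrtm A = B := by
  have hA : A.PosSemidef := by
    rw [← hBA]
    nth_rewrite 1 [← hB.1]
    exact posSemidef_conjTranspose_mul_self B
  rw [sqrtm_eq hA]
  exact CFC.sqrt_unique hBA hB.nonneg

lemma psd_det_nonneg {A : Matrix (Fin n) (Fin n) ℝ} (h : A.PosSemidef) : 0 ≤ A.det := by
  rw [← sqrtm_mul_self h, det_mul]
  exact mul_self_nonneg _

lemma sqrtm_conj {U P : Matrix (Fin n) (Fin n) ℝ} (hP : P.PosSemidef)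
    (h2 : Uᴴ * U = 1) : sqrtm (U * P * Uᴴ) = U * sqrtm P * Uᴴ := by
  apply sqrtm_unique ((sqrtm_psd hP).mul_mul_conjTranspose_same U)
  calc (U * sqrtm P * Uᴴ) * (U * sqrtm P * Uᴴ)
      = U * (sqrtm P * ((Uᴴ * U) * (sqrtm P * Uᴴ))) := by simp only [mul_assoc]
    _ = U * (sqrtm P * sqrtm P) * Uᴴ := by rw [h2, one_mul]; simp only [mul_assoc]
    _ = U * P * Uᴴ := by rw [sqrtm_mul_self hP]

lemma smul_one_conj {c : ℝ} {V : Matrix (Fin n) (Fin n) ℝ} (hV : V * Vᴴ = 1) :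
    c • (1 : Matrix (Fin n) (Fin n) ℝ) = V * diagonal (fun _ => c) * Vᴴ := by
  have hd : (diagonal (fun _ => c) : Matrix (Fin n) (Fin n) ℝ) = c • 1 := by
    ext i j
    by_cases h : i = j <;> simp [diagonal, one_apply, h]
  rw [hd, mul_smul_comm, smul_mul_assoc, mul_one, hV]

lemma shift_psd {Q : Matrix (Fin n) (Fin n) ℝ} (hQ : Q.PosSemidef) {c : ℝ} (hc : 0 ≤ c) :
    (sqrtm (c ^ 2 • (1 : Matrix (Fin n) (Fin n) ℝ) + Q) - c • 1).PosSemidef := by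
  have hH := hQ.1
  set V : Matrix (Fin n) (Fin n) ℝ := (hH.eigenvectorUnitary : Matrix (Fin n) (Fin n) ℝ) with hVdef
  have hV1 : V * Vᴴ = 1 := by
    rw [← star_eq_conjTranspose]
    exact mem_unitaryGroup_iff.mp hH.eigenvectorUnitary.2
  have hV2 : Vᴴ * V = 1 := by
    rw [← star_eq_conjTranspose]
    exact mem_unitaryGroup_iff'.mp hH.eigenvectorUnitary.2
  have hspec : Q = V * diagonal hH.eigenvalues * Vᴴ := by
    have h := hH.spectral_theorem
    rw [← star_eq_conjTranspose]
    simpa [RCLike.ofReal_real_eq_id] using h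
  have key : c ^ 2 • (1 : Matrix (Fin n) (Fin n) ℝ) + Q
      = V * diagonal (fun i => c ^ 2 + hH.eigenvalues i) * Vᴴ := by
    calc c ^ 2 • (1 : Matrix (Fin n) (Fin n) ℝ) + Q
        = V * diagonal (fun _ => c ^ 2) * Vᴴ + V * diagonal hH.eigenvalues * Vᴴ :=
          congrArg₂ (· + ·) (smul_one_conj hV1) hspec
      _ = V * (diagonal (fun _ => c ^ 2) + diagonal hH.eigenvalues) * Vᴴ := by
          rw [← add_mul, ← mul_add]
      _ = V * diagonal (fun i => c ^ 2 + hH.eigenvalues i) * Vᴴ := by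
          rw [diagonal_add]
  have hfnn : ∀ i, 0 ≤ c ^ 2 + hH.eigenvalues i :=
    fun i => add_nonneg (sq_nonneg c) (hQ.eigenvalues_nonneg i)
  have hsq : sqrtm (c ^ 2 • (1 : Matrix (Fin n) (Fin n) ℝ) + Q)
      = V * diagonal (fun i => Real.sqrt (c ^ 2 + hH.eigenvalues i)) * Vᴴ := by
    rw [key]
    apply sqrtm_unique
      ((posSemidef_diagonal_iff.mpr fun i => Real.sqrt_nonneg _).mul_mul_conjTranspose_same V)
    calc (V * diagonal (fun i => Real.sqrt (c ^ 2 + hH.eigenvalues i)) * Vᴴ)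
          * (V * diagonal (fun i => Real.sqrt (c ^ 2 + hH.eigenvalues i)) * Vᴴ)
        = V * (diagonal (fun i => Real.sqrt (c ^ 2 + hH.eigenvalues i)) * ((Vᴴ * V)
            * (diagonal (fun i => Real.sqrt (c ^ 2 + hH.eigenvalues i)) * Vᴴ))) := by
          simp only [mul_assoc]
      _ = V * (diagonal (fun i => Real.sqrt (c ^ 2 + hH.eigenvalues i))
            * diagonal (fun i => Real.sqrt (c ^ 2 + hH.eigenvalues i))) * Vᴴ := by
          rw [hV2, one_mul]; simp only [mul_assoc]
      _ = V * diagonal (fun i => c ^ 2 + hH.eigenvalues i) * Vᴴ := by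
          have hfe : (fun i => Real.sqrt (c ^ 2 + hH.eigenvalues i)
              * Real.sqrt (c ^ 2 + hH.eigenvalues i)) = fun i => c ^ 2 + hH.eigenvalues i :=
            funext fun i => Real.mul_self_sqrt (hfnn i)
          rw [diagonal_mul_diagonal, hfe]
  rw [hsq, smul_one_conj (c := c) hV1, ← sub_mul, ← mul_sub, diagonal_sub]
  refine (posSemidef_diagonal_iff.mpr fun i => ?_).mul_mul_conjTranspose_same V
  have h2 : Real.sqrt (c ^ 2) ≤ Real.sqrt (c ^ 2 + hH.eigenvalues i) :=
    Real.sqrt_le_sqrt (le_add_of_nonneg_right (hQ.eigenvalues_nonneg i))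
  rw [Real.sqrt_sq hc] at h2
  exact sub_nonneg.mpr h2

end Aux

set_option maxHeartbeats 1000000 in
theorem stmt_19 {n : ℕ} (ε : ℝ) (hε : 0 < ε)
    (K₁ K₂ : Matrix (Fin n) (Fin n) ℝ) (hK₁ : K₁.PosDef) (hK₂ : K₂.PosDef)
    (S Me : Matrix (Fin n) (Fin n) ℝ)
    (hS : S = (ε / 8) • ((sqrtm K₂)⁻¹ *
      (-(ε • (1 : Matrix (Fin n) (Fin n) ℝ)) +
        sqrtm (ε ^ 2 • (1 : Matrix (Fin n) (Fin n) ℝ) + (16 : ℝ) • (sqrtm K₂ * K₁ * sqrtm K₂))) *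
      (sqrtm K₂)⁻¹))
    (hM : Me = 1 + sqrtm (1 + (16 / ε ^ 2) • (sqrtm K₁ * K₂ * sqrtm K₁))) :
    (sqrtm K₂ * (K₁ - S) * sqrtm K₂).PosSemidef ∧
      (sqrtm (sqrtm K₂ * (K₁ - S) * sqrtm K₂)).trace = (ε / 4) * (Me.trace - 2 * n) ∧
      Real.log K₁.det - Real.log S.det = Real.log Me.det - n * Real.log 2 := by
  have hK₁s := hK₁.posSemidef
  have hK₂s := hK₂.posSemidef
  set R₁ := sqrtm K₁ with hR₁def
  set R₂ := sqrtm K₂ with hR₂def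
  have hR₁p := sqrtm_psd hK₁s
  have hR₂p := sqrtm_psd hK₂s
  have hR₁h : R₁ᴴ = R₁ := hR₁p.1
  have hR₂h : R₂ᴴ = R₂ := hR₂p.1
  have hR₁sq : R₁ * R₁ = K₁ := sqrtm_mul_self hK₁s
  have hR₂sq : R₂ * R₂ = K₂ := sqrtm_mul_self hK₂s
  have hdK₁ : (0:ℝ) < K₁.det := hK₁.det_pos
  have hdK₂ : (0:ℝ) < K₂.det := hK₂.det_pos
  have hK₂det : K₂.det = R₂.det * R₂.det := by rw [← hR₂sq, det_mul]
  have hK₁det : K₁.det = R₁.det * R₁.det := by rw [← hR₁sq, det_mul]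
  have hdR₂ : R₂.det ≠ 0 := by
    intro h; rw [hK₂det, h, mul_zero] at hdK₂; exact lt_irrefl 0 hdK₂
  have hdR₁ : R₁.det ≠ 0 := by
    intro h; rw [hK₁det, h, mul_zero] at hdK₁; exact lt_irrefl 0 hdK₁
  have hR₂i : R₂ * R₂⁻¹ = 1 := mul_nonsing_inv _ (isUnit_iff_ne_zero.mpr hdR₂)
  have hR₂i' : R₂⁻¹ * R₂ = 1 := nonsing_inv_mul _ (isUnit_iff_ne_zero.mpr hdR₂)
  set A := R₂ * K₁ * R₂ with hAdef
  have hApsd : A.PosSemidef := by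
    have h := hK₁s.mul_mul_conjTranspose_same R₂; rwa [hR₂h] at h
  set W := ε ^ 2 • (1 : Matrix (Fin n) (Fin n) ℝ) + (16:ℝ) • A with hWdef
  have h16A : ((16:ℝ) • A).PosSemidef := psd_smul (by norm_num) hApsd
  have hWpsd : W.PosSemidef := (psd_smul (sq_nonneg ε) Matrix.PosSemidef.one).add h16A
  set B := sqrtm W with hBdef
  have hBpsd : B.PosSemidef := sqrtm_psd hWpsd
  have hBsq : B * B = W := sqrtm_mul_self hWpsd
  have hBmin : (B - ε • (1 : Matrix (Fin n) (Fin n) ℝ)).PosSemidef := shift_psd h16A hε.le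
  -- conjugated S
  have hSconj : R₂ * S * R₂ = (ε/8) • (B - ε • 1) := by
    rw [hS, mul_smul_comm, smul_mul_assoc]
    congr 1
    calc R₂ * (R₂⁻¹ * (-(ε • (1 : Matrix (Fin n) (Fin n) ℝ)) + B) * R₂⁻¹) * R₂
        = (R₂ * R₂⁻¹) * (-(ε • 1) + B) * (R₂⁻¹ * R₂) := by simp only [mul_assoc]
      _ = -(ε • 1) + B := by rw [hR₂i, hR₂i', one_mul, mul_one]
      _ = B - ε • 1 := neg_add_eq_sub _ _
  have hMfold : R₂ * (K₁ - S) * R₂ = A - (ε/8) • (B - ε • 1) := by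
    rw [mul_sub, sub_mul, hSconj, hAdef]
  set N := (1/4 : ℝ) • (B - ε • (1 : Matrix (Fin n) (Fin n) ℝ)) with hNdef
  have hNpsd : N.PosSemidef := psd_smul (by norm_num) hBmin
  have hexp : (B - ε • (1 : Matrix (Fin n) (Fin n) ℝ)) * (B - ε • 1)
      = B * B - ε • B - ε • B + (ε*ε) • (1 : Matrix (Fin n) (Fin n) ℝ) := by
    simp only [sub_mul, mul_sub, smul_mul_assoc, mul_smul_comm, smul_sub, smul_smul, one_mul, mul_one]
    abel
  have hNN : N * N = R₂ * (K₁ - S) * R₂ := by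
    rw [hMfold, hNdef, smul_mul_assoc, mul_smul_comm, smul_smul, hexp, hBsq, hWdef]
    module
  have goal1 : (R₂ * (K₁ - S) * R₂).PosSemidef := by
    rw [← hNN]
    nth_rewrite 1 [← hNpsd.1]
    exact posSemidef_conjTranspose_mul_self N
  have hsqrtM : sqrtm (R₂ * (K₁ - S) * R₂) = N := sqrtm_unique hNpsd hNN
  -- polar decomposition
  set A' := R₁ * K₂ * R₁ with hA'def
  have hA'psd : A'.PosSemidef := by
    have h := hK₂s.mul_mul_conjTranspose_same R₁; rwa [hR₁h] at h
  set P := sqrtm A' with hPdef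
  have hPpsd : P.PosSemidef := sqrtm_psd hA'psd
  have hPsq : P * P = A' := sqrtm_mul_self hA'psd
  have hPh : Pᴴ = P := hPpsd.1
  have hdA' : A'.det ≠ 0 := by
    rw [hA'def, det_mul, det_mul]
    exact mul_ne_zero (mul_ne_zero hdR₁ hdK₂.ne') hdR₁
  have hdP : P.det ≠ 0 := by
    intro h
    have h1 : P.det * P.det = A'.det := by rw [← det_mul, hPsq]
    rw [h, mul_zero] at h1
    exact hdA' h1.symm
  have hPi : P * P⁻¹ = 1 := mul_nonsing_inv _ (isUnit_iff_ne_zero.mpr hdP)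
  have hPi' : P⁻¹ * P = 1 := nonsing_inv_mul _ (isUnit_iff_ne_zero.mpr hdP)
  have hPinvh : (P⁻¹)ᴴ = P⁻¹ := by rw [conjTranspose_nonsing_inv, hPh]
  set U := (R₂ * R₁) * P⁻¹ with hUdef
  have hUh : Uᴴ = P⁻¹ * (R₁ * R₂) := by
    rw [hUdef, conjTranspose_mul, conjTranspose_mul, hPinvh, hR₁h, hR₂h]
  have hXX : (R₁ * R₂) * (R₂ * R₁) = A' := by
    rw [hA'def, ← hR₂sq]; simp only [mul_assoc]
  have hU1 : Uᴴ * U = 1 := by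
    rw [hUh, hUdef]
    calc P⁻¹ * (R₁ * R₂) * ((R₂ * R₁) * P⁻¹)
        = P⁻¹ * ((R₁ * R₂) * (R₂ * R₁)) * P⁻¹ := by simp only [mul_assoc]
      _ = P⁻¹ * (P * P) * P⁻¹ := by rw [hXX, hPsq]
      _ = 1 := by rw [← mul_assoc, hPi', one_mul, hPi]
  have hU2 : U * Uᴴ = 1 := mul_eq_one_comm.mp hU1
  have hUAU : U * A' * Uᴴ = A := by
    rw [hUdef, hUh, ← hPsq]
    calc (R₂ * R₁) * P⁻¹ * (P * P) * (P⁻¹ * (R₁ * R₂))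
        = (R₂ * R₁) * ((P⁻¹ * P) * ((P * P⁻¹) * (R₁ * R₂))) := by simp only [mul_assoc]
      _ = (R₂ * R₁) * (R₁ * R₂) := by rw [hPi', hPi, one_mul, one_mul]
      _ = A := by rw [hAdef, ← hR₁sq]; simp only [mul_assoc]
  set W' := ε ^ 2 • (1 : Matrix (Fin n) (Fin n) ℝ) + (16:ℝ) • A' with hW'def
  have hW'psd : W'.PosSemidef :=
    (psd_smul (sq_nonneg ε) Matrix.PosSemidef.one).add (psd_smul (by norm_num) hA'psd)
  set B' := sqrtm W' with hB'def
  have hB'psd : B'.PosSemidef := sqrtm_psd hW'psd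
  have hB'sq : B' * B' = W' := sqrtm_mul_self hW'psd
  have hUWU : U * W' * Uᴴ = W := by
    rw [hW'def, mul_add, add_mul, mul_smul_comm, smul_mul_assoc, mul_one, hU2,
      mul_smul_comm, smul_mul_assoc, hUAU, hWdef]
  have hBU : B = U * B' * Uᴴ := by
    rw [hBdef, ← hUWU, sqrtm_conj hW'psd hU1, hB'def]
  have htrB : B.trace = B'.trace := by
    rw [hBU, trace_mul_cycle U B' Uᴴ, hU1, one_mul]
  have hMe' : Me = 1 + ε⁻¹ • B' := by
    rw [hM]
    congr 1
    have hsq' : (ε⁻¹ • B') * (ε⁻¹ • B') = 1 + (16/ε^2) • A' := by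
      rw [smul_mul_assoc, mul_smul_comm, smul_smul, hB'sq, hW'def, smul_add, smul_smul, smul_smul]
      have e1 : ε⁻¹ * ε⁻¹ * ε ^ 2 = 1 := by field_simp
      have e2 : ε⁻¹ * ε⁻¹ * 16 = 16 / ε ^ 2 := by field_simp
      rw [e1, e2, one_smul]
    exact sqrtm_unique (psd_smul (inv_nonneg.mpr hε.le) hB'psd) hsq'
  have htrMe : Me.trace = n + ε⁻¹ * B'.trace := by
    rw [hMe', trace_add, trace_smul, trace_one, Fintype.card_fin, smul_eq_mul]
  have goal2 : (sqrtm (R₂ * (K₁ - S) * R₂)).trace = (ε/4) * (Me.trace - 2 * n) := by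
    rw [hsqrtM, hNdef, trace_smul, trace_sub, trace_smul, trace_one, Fintype.card_fin,
      smul_eq_mul, smul_eq_mul, htrB, htrMe]
    field_simp
    ring
  -- determinant part
  have hdetA : A.det = K₂.det * K₁.det := by
    rw [hAdef, det_mul, det_mul, hK₂det]; ring
  have hfact : (B - ε • (1 : Matrix (Fin n) (Fin n) ℝ)) * (B + ε • 1) = (16:ℝ) • A := by
    have hexp2 : (B - ε • (1 : Matrix (Fin n) (Fin n) ℝ)) * (B + ε • 1)
        = B * B + ε • B - ε • B - (ε*ε) • (1 : Matrix (Fin n) (Fin n) ℝ) := by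
      simp only [sub_mul, mul_add, smul_mul_assoc, mul_smul_comm, smul_add, smul_sub, smul_smul, one_mul, mul_one]
      abel
    rw [hexp2, hBsq, hWdef]
    module
  have hdetfact : (B - ε • (1 : Matrix (Fin n) (Fin n) ℝ)).det * (B + ε • 1).det
      = 16^n * A.det := by
    rw [← det_mul, hfact, det_smul, Fintype.card_fin]
  have hBplus : B + ε • (1 : Matrix (Fin n) (Fin n) ℝ) = U * (B' + ε • 1) * Uᴴ := by
    rw [hBU, mul_add, add_mul, mul_smul_comm, smul_mul_assoc, mul_one, hU2]
  have hdetBplus : (B + ε • (1 : Matrix (Fin n) (Fin n) ℝ)).det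
      = (B' + ε • (1 : Matrix (Fin n) (Fin n) ℝ)).det := by
    rw [hBplus, det_mul, det_mul]
    have hUU : U.det * Uᴴ.det = 1 := by rw [← det_mul, hU2, det_one]
    linear_combination (B' + ε • (1 : Matrix (Fin n) (Fin n) ℝ)).det * hUU
  have hB'Me : B' + ε • (1 : Matrix (Fin n) (Fin n) ℝ) = ε • Me := by
    rw [hMe', smul_add, smul_smul, mul_inv_cancel₀ hε.ne', one_smul, add_comm]
  have hdetMeB : (B + ε • (1 : Matrix (Fin n) (Fin n) ℝ)).det = ε^n * Me.det := by
    rw [hdetBplus, hB'Me, det_smul, Fintype.card_fin]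
  have hdBm_nonneg : 0 ≤ (B - ε • (1 : Matrix (Fin n) (Fin n) ℝ)).det := psd_det_nonneg hBmin
  have hprodpos : 0 < (B - ε • (1 : Matrix (Fin n) (Fin n) ℝ)).det * (B + ε • 1).det := by
    rw [hdetfact, hdetA]; positivity
  have hdBm : 0 < (B - ε • (1 : Matrix (Fin n) (Fin n) ℝ)).det := by
    rcases eq_or_lt_of_le hdBm_nonneg with h | h
    · rw [← h, zero_mul] at hprodpos; exact absurd hprodpos (lt_irrefl 0)
    · exact h
  have hdBp : 0 < (B + ε • (1 : Matrix (Fin n) (Fin n) ℝ)).det := by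
    rcases mul_pos_iff.mp hprodpos with ⟨_, h⟩ | ⟨h, _⟩
    · exact h
    · linarith
  have hdMe : 0 < Me.det := by
    have hεn : (0:ℝ) < ε^n := pow_pos hε n
    nlinarith [hdetMeB, hdBp]
  have hdS : S.det = (ε/8)^n * (B - ε • (1 : Matrix (Fin n) (Fin n) ℝ)).det * (K₂.det)⁻¹ := by
    rw [hS, det_smul, Fintype.card_fin, det_mul, det_mul, det_nonsing_inv,
      Ring.inverse_eq_inv, neg_add_eq_sub, hK₂det, mul_inv]
    ring
  have hdSpos : 0 < S.det := by
    rw [hdS]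
    exact mul_pos (mul_pos (pow_pos (by linarith) n) hdBm) (inv_pos.mpr hdK₂)
  have hkey : S.det * Me.det = 2^n * K₁.det := by
    have hεn : (ε:ℝ)^n ≠ 0 := pow_ne_zero n hε.ne'
    have hMe'' : Me.det = (B + ε • (1 : Matrix (Fin n) (Fin n) ℝ)).det / ε^n := by
      rw [hdetMeB]; field_simp
    have h16 : (16:ℝ)^n = 2^n * 8^n := by rw [← mul_pow]; norm_num
    have hdBmp : (B - ε • (1 : Matrix (Fin n) (Fin n) ℝ)).det * (B + ε • 1).det
        = 2^n * 8^n * (K₂.det * K₁.det) := by rw [hdetfact, hdetA, h16]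
    have hstep : S.det * Me.det * (ε^n * K₂.det) = (2^n * K₁.det) * (ε^n * K₂.det) := by
      calc S.det * Me.det * (ε^n * K₂.det)
          = (ε/8)^n * (B - ε • (1 : Matrix (Fin n) (Fin n) ℝ)).det * (K₂.det⁻¹ * K₂.det)
            * (ε^n * Me.det) := by rw [hdS]; ring
        _ = (ε/8)^n * (B - ε • (1 : Matrix (Fin n) (Fin n) ℝ)).det * (K₂.det⁻¹ * K₂.det)
            * (B + ε • 1).det := by rw [← hdetMeB]
        _ = (ε/8)^n * ((B - ε • (1 : Matrix (Fin n) (Fin n) ℝ)).det * (B + ε • 1).det) * 1 := by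
            rw [inv_mul_cancel₀ hdK₂.ne']; ring
        _ = (ε/8)^n * (2^n * 8^n * (K₂.det * K₁.det)) * 1 := by rw [hdBmp]
        _ = (2^n * K₁.det) * (ε^n * K₂.det) := by
            rw [div_pow, mul_one]
            field_simp
    exact mul_right_cancel₀ (mul_ne_zero hεn hdK₂.ne') hstep
  refine ⟨goal1, goal2, ?_⟩
  have h2n : (0:ℝ) < 2^n := by positivity
  have hlog : Real.log (S.det * Me.det) = Real.log (2^n * K₁.det) := by rw [hkey]
  rw [Real.log_mul hdSpos.ne' hdMe.ne', Real.log_mul h2n.ne' hdK₁.ne', Real.log_pow] at hlog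
  linarith
end
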